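/- If p : E → B is a fibration, then p has the weakly homotopically unique path lifting property (whupl) if and only if p has the weakly unique path homotopically lifting property (wuphl). -/

import Mathlib

universe u

open scoped unitInterval

/-- `p` has the weakly homotopically unique path lifting property (whupl). -/
def Whupl {E B : Type*} [TopologicalSpace E] [TopologicalSpace B] (p : C(E, B)) : Prop :=
  ∀ α β : C(unitInterval, E), α 0 = β 0 → α 1 = β 1 → p.comp α = p.comp β →
    α.HomotopicRel β {0, 1}

/-- `p` has the weakly unique path homotopically lifting property (wuphl). -/
def Wuphl {E B : Type*} [TopologicalSpace E] [TopologicalSpace B] (p : C(E, B)) : Prop :=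
  ∀ α β : C(unitInterval, E), α 0 = β 0 → α 1 = β 1 →
    (p.comp α).HomotopicRel (p.comp β) {0, 1} →
    α.HomotopicRel β {0, 1}

/-- `p` is a (Hurewicz) fibration: it has the homotopy lifting property with respect to
every topological space. -/
def IsFibration {E B : Type*} [TopologicalSpace E] [TopologicalSpace B] (p : C(E, B)) : Prop :=
  ∀ (X : Type u) [TopologicalSpace X] (f : C(X, E)) (F : C(X × unitInterval, B)),
    (∀ x, F (x, 0) = p (f x)) →
    ∃ F' : C(X × unitInterval, E), (∀ z, p (F' z) = F z) ∧ (∀ x, F' (x, 0) = f x)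

namespace FibrationAux

open unitInterval

/-- The square `I × I` is contractible. -/
instance : ContractibleSpace (I × I) := by
  rw [contractible_iff_id_nullhomotopic]
  refine ⟨((0 : I), (0 : I)), ⟨?_⟩⟩
  exact
    { toFun := fun z => (⟨(σ z.1 : ℝ) * (z.2.1 : ℝ), mul_mem (σ z.1).2 z.2.1.2⟩,
        ⟨(σ z.1 : ℝ) * (z.2.2 : ℝ), mul_mem (σ z.1).2 z.2.2.2⟩)
      continuous_toFun := by
        apply Continuous.prodMk
        · exact (((continuous_symm.comp continuous_fst).subtype_val).mul
            ((continuous_fst.comp continuous_snd).subtype_val)).subtype_mk _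
        · exact (((continuous_symm.comp continuous_fst).subtype_val).mul
            ((continuous_snd.comp continuous_snd).subtype_val)).subtype_mk _
      map_zero_left := fun z => by
        ext <;> simp
      map_one_left := fun z => by
        ext <;> simp }

/-- The identity path from `0` to `1` in `I`. -/
def q : Path (0 : I) (1 : I) := ⟨⟨id, continuous_id⟩, rfl, rfl⟩

/-- The square lemma: going along the bottom then the right side of a square is homotopic
rel endpoints to going along the left side and then the top. -/
theorem square {E : Type*} [TopologicalSpace E] (G : C(I × I, E)) :
    (((q.prod (Path.refl (0 : I))).map G.continuous).trans
        (((Path.refl (1 : I)).prod q).map G.continuous)).Homotopic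
      ((((Path.refl (0 : I)).prod q).map G.continuous).trans
        ((q.prod (Path.refl (1 : I))).map G.continuous)) := by
  have h : ((q.prod (Path.refl (0 : I))).trans ((Path.refl (1 : I)).prod q)).Homotopic
      (((Path.refl (0 : I)).prod q).trans (q.prod (Path.refl (1 : I)))) :=
    SimplyConnectedSpace.paths_homotopic _ _
  have := Path.Homotopic.map h G
  rwa [Path.map_trans, Path.map_trans] at this

end FibrationAux

theorem fibration_whupl_iff_wuphl {E B : Type*} [TopologicalSpace E] [TopologicalSpace B]
    (p : C(E, B)) (hp : IsFibration p) :
    Whupl p ↔ Wuphl p := by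
  constructor
  · intro w α β h0 h1 hcab
    obtain ⟨H⟩ := hcab
    -- lift the homotopy `H`
    obtain ⟨G', hG'p, hG'0⟩ := hp (ULift unitInterval)
      (α.comp ⟨ULift.down, continuous_uliftDown⟩)
      ((H : C(unitInterval × unitInterval, B)).comp
        ⟨fun z => (z.2, z.1.down), by fun_prop⟩)
      (fun x => by
        show H (0, x.down) = p (α x.down)
        exact H.toHomotopy.apply_zero x.down)
    set G : C(unitInterval × unitInterval, E) :=
      G'.comp ⟨fun z => (ULift.up z.1, z.2), (continuous_uliftUp.comp continuous_fst).prodMk continuous_snd⟩ with hG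
    have hGp : ∀ t s : unitInterval, p (G (t, s)) = H (s, t) := fun t s => hG'p _
    have hG0 : ∀ t : unitInterval, G (t, 0) = α t := fun t => hG'0 ⟨t⟩
    -- the four sides of the lifted square
    open FibrationAux in
    set bot : Path (G (0, 0)) (G (1, 0)) := (q.prod (Path.refl (0 : unitInterval))).map
      G.continuous with hbot
    set rgt : Path (G (1, 0)) (G (1, 1)) := ((Path.refl (1 : unitInterval)).prod q).map
      G.continuous with hrgt
    set lft : Path (G (0, 0)) (G (0, 1)) := ((Path.refl (0 : unitInterval)).prod q).map
      G.continuous with hlft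
    set top : Path (G (0, 1)) (G (1, 1)) := (q.prod (Path.refl (1 : unitInterval))).map
      G.continuous with htop
    have hsq : (bot.trans rgt).Homotopic (lft.trans top) := FibrationAux.square G
    -- `β` as a path with the same endpoints as `bot`
    have hb0 : β 0 = G (0, 0) := by rw [hG0 0]; exact h0.symm
    have hb1 : β 1 = G (1, 0) := by rw [hG0 1]; exact h1.symm
    set B' : Path (G (0, 0)) (G (1, 0)) := ⟨β, hb0, hb1⟩ with hB'
    set X₁ : Path (G (0, 0)) (G (1, 0)) := lft.trans (top.trans rgt.symm) with hX₁
    set X₂ : Path (G (0, 0)) (G (1, 0)) :=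
      (Path.refl (G (0, 0))).trans (B'.trans (Path.refl (G (1, 0)))) with hX₂
    -- apply whupl to `X₁` and `X₂`
    have hw : X₁.Homotopic X₂ := by
      apply w X₁.toContinuousMap X₂.toContinuousMap
      · show X₁ 0 = X₂ 0
        rw [X₁.source, X₂.source]
      · show X₁ 1 = X₂ 1
        rw [X₁.target, X₂.target]
      · ext t
        show p (X₁ t) = p (X₂ t)
        rw [hX₁, hX₂, Path.trans_apply, Path.trans_apply]
        split_ifs with ht
        · show p (G (0, _)) = p (G (0, 0))
          rw [hGp, hGp]
          rw [H.eq_fst _ (Or.inl rfl), H.eq_fst _ (Or.inl rfl)]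
        · rw [Path.trans_apply, Path.trans_apply]
          split_ifs with ht2
          · show p (G (_, 1)) = p (β _)
            rw [hGp]
            exact H.toHomotopy.apply_one _
          · show p (rgt.symm _) = p (G (1, 0))
            rw [Path.symm_apply]
            show p (G (1, _)) = p (G (1, 0))
            rw [hGp, hGp]
            rw [H.eq_snd _ (Or.inr rfl), H.eq_fst _ (Or.inr rfl)]
            simp only [ContinuousMap.comp_apply, h1]
    -- chain the homotopies together
    have hchain : bot.Homotopic B' := by
      have c1 : bot.Homotopic (bot.trans (Path.refl (G (1, 0)))) :=
        (Path.Homotopic.symm ⟨Path.Homotopy.transRefl bot⟩)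
      have c2 : (bot.trans (Path.refl (G (1, 0)))).Homotopic
          (bot.trans (rgt.trans rgt.symm)) :=
        Path.Homotopic.hcomp (Path.Homotopic.refl bot) ⟨Path.Homotopy.reflTransSymm rgt⟩
      have c3 : (bot.trans (rgt.trans rgt.symm)).Homotopic
          ((bot.trans rgt).trans rgt.symm) :=
        Path.Homotopic.symm ⟨Path.Homotopy.transAssoc bot rgt rgt.symm⟩
      have c4 : ((bot.trans rgt).trans rgt.symm).Homotopic
          ((lft.trans top).trans rgt.symm) :=
        Path.Homotopic.hcomp hsq (Path.Homotopic.refl rgt.symm)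
      have c5 : ((lft.trans top).trans rgt.symm).Homotopic X₁ :=
        ⟨Path.Homotopy.transAssoc lft top rgt.symm⟩
      have c6 : X₂.Homotopic B' :=
        Path.Homotopic.trans ⟨Path.Homotopy.reflTrans (B'.trans (Path.refl (G (1, 0))))⟩
          ⟨Path.Homotopy.transRefl B'⟩
      exact ((((c1.trans c2).trans c3).trans c4).trans c5).trans (hw.trans c6)
    obtain ⟨HH⟩ := hchain
    have hba : bot.toContinuousMap = α := by
      ext t
      exact hG0 t
    have hbb : B'.toContinuousMap = β := rfl
    rw [← hba, ← hbb]
    exact ⟨HH⟩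
  · intro w α β h0 h1 hcab
    exact w α β h0 h1 (hcab ▸ ContinuousMap.HomotopicRel.refl _)
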